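/- arXiv:1108.3329 — 3 statements merged into one kernel-verified Lean document; each statement's English description precedes it below -/
import Mathlib

section
/- Let x ∈ R^n be a random vector whose components along orthogonal complementary subspaces V and W are independent, suppose m is odd, and suppose E[(x^T v)^j] = 0 for every unit vector v and every odd j < m. Then for every unit vector u ∈ R^n, E[(x^T u)^m] = ||u_V||^m · E[(x_V^T u_V^0)^m] + ||u_W||^m · E[(x_W^T u_W^0)^m], where u_V = π_V(u), u_W = π_W(u), and u_V^0, u_W^0 are the corresponding unit vectors. -/
open MeasureTheory ProbabilityTheory

/-- Inner product with a vector of a subspace sees only the projection. -/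
lemma aux_proj_inner {n : ℕ} (V : Submodule ℝ (EuclideanSpace ℝ (Fin n)))
    (y w : EuclideanSpace ℝ (Fin n)) (hw : w ∈ V) :
    (inner ℝ ((Submodule.orthogonalProjectionOnto V y : EuclideanSpace ℝ (Fin n))) w : ℝ) = inner ℝ y w := by
  have h0 : (inner ℝ (y - (Submodule.orthogonalProjectionOnto V y : EuclideanSpace ℝ (Fin n))) w : ℝ) = 0 :=
    Submodule.starProjection_inner_eq_zero y w hw
  rw [inner_sub_left] at h0
  linarith

/-- Representation of the m-th directional moment (odd m) for a distribution whose
projections onto a subspace V and its orthogonal complement are independent and whose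
odd directional moments of order < m all vanish. -/
theorem stmt_3 {Ω : Type*} [MeasurableSpace Ω] (P : Measure Ω) [IsProbabilityMeasure P]
    (n : ℕ) (x : Ω → EuclideanSpace ℝ (Fin n)) (hxmeas : Measurable x)
    (V : Submodule ℝ (EuclideanSpace ℝ (Fin n)))
    (hindep : IndepFun
      (fun ω => (Submodule.orthogonalProjectionOnto V (x ω) : EuclideanSpace ℝ (Fin n)))
      (fun ω => (Submodule.orthogonalProjectionOnto Vᗮ (x ω) : EuclideanSpace ℝ (Fin n))) P)
    (m : ℕ) (hm : Odd m)
    (hmoments : ∀ j ≤ m, Integrable (fun ω => ‖x ω‖ ^ j) P)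
    (hodd : ∀ v : EuclideanSpace ℝ (Fin n), ‖v‖ = 1 → ∀ j, Odd j → j < m →
      ∫ ω, (inner ℝ (x ω) v : ℝ) ^ j ∂P = 0)
    (u : EuclideanSpace ℝ (Fin n)) (hu : ‖u‖ = 1) :
    ∫ ω, (inner ℝ (x ω) u : ℝ) ^ m ∂P =
      ‖(Submodule.orthogonalProjectionOnto V u : EuclideanSpace ℝ (Fin n))‖ ^ m *
        ∫ ω, (inner ℝ ((Submodule.orthogonalProjectionOnto V (x ω) : EuclideanSpace ℝ (Fin n)))
          (‖(Submodule.orthogonalProjectionOnto V u : EuclideanSpace ℝ (Fin n))‖⁻¹ •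
            (Submodule.orthogonalProjectionOnto V u : EuclideanSpace ℝ (Fin n))) : ℝ) ^ m ∂P
      + ‖(Submodule.orthogonalProjectionOnto Vᗮ u : EuclideanSpace ℝ (Fin n))‖ ^ m *
        ∫ ω, (inner ℝ ((Submodule.orthogonalProjectionOnto Vᗮ (x ω) : EuclideanSpace ℝ (Fin n)))
          (‖(Submodule.orthogonalProjectionOnto Vᗮ u : EuclideanSpace ℝ (Fin n))‖⁻¹ •
            (Submodule.orthogonalProjectionOnto Vᗮ u : EuclideanSpace ℝ (Fin n))) : ℝ) ^ m ∂P := by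
  classical
  have hm1 : 0 < m := hm.pos
  set uV : EuclideanSpace ℝ (Fin n) := (Submodule.orthogonalProjectionOnto V u : EuclideanSpace ℝ (Fin n))
    with huVdef
  set uW : EuclideanSpace ℝ (Fin n) := (Submodule.orthogonalProjectionOnto Vᗮ u : EuclideanSpace ℝ (Fin n))
    with huWdef
  have huvw : uV + uW = u := Submodule.starProjection_add_starProjection_orthogonal (K := V) u
  set A : Ω → ℝ := fun ω => inner ℝ (x ω) uV with hAdef
  set B : Ω → ℝ := fun ω => inner ℝ (x ω) uW with hBdef
  -- integrability of directional moments
  have hint : ∀ (w : EuclideanSpace ℝ (Fin n)) (k : ℕ), k ≤ m →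
      Integrable (fun ω => (inner ℝ (x ω) w : ℝ) ^ k) P := by
    intro w k hk
    have hmeas : AEStronglyMeasurable (fun ω => (inner ℝ (x ω) w : ℝ) ^ k) P :=
      ((((continuous_id.inner continuous_const).measurable).comp hxmeas).pow_const
        k).aestronglyMeasurable
    refine ((hmoments k hk).const_mul (‖w‖ ^ k)).mono' hmeas ?_
    filter_upwards with ω
    have h1 : |(inner ℝ (x ω) w : ℝ)| ≤ ‖x ω‖ * ‖w‖ := abs_real_inner_le_norm _ _
    calc ‖(inner ℝ (x ω) w : ℝ) ^ k‖ = |(inner ℝ (x ω) w : ℝ)| ^ k := by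
          rw [Real.norm_eq_abs, abs_pow]
      _ ≤ (‖x ω‖ * ‖w‖) ^ k := pow_le_pow_left₀ (abs_nonneg _) h1 k
      _ = ‖w‖ ^ k * ‖x ω‖ ^ k := by ring
  -- vanishing of odd moments of degree < m along any (not nec. unit) vector
  have hzero : ∀ (w : EuclideanSpace ℝ (Fin n)) (k : ℕ), Odd k → k < m →
      ∫ ω, (inner ℝ (x ω) w : ℝ) ^ k ∂P = 0 := by
    intro w k hk hkm
    by_cases hw : w = 0
    · simp [hw, zero_pow hk.pos.ne']
    · have hwn : ‖w‖ ≠ 0 := norm_ne_zero_iff.mpr hw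
      have hnorm : ‖(‖w‖⁻¹ • w)‖ = 1 := by
        rw [norm_smul, norm_inv, norm_norm, inv_mul_cancel₀ hwn]
      have h := hodd _ hnorm k hk hkm
      have hrw : ∀ ω, (inner ℝ (x ω) w : ℝ) ^ k
          = ‖w‖ ^ k * (inner ℝ (x ω) (‖w‖⁻¹ • w) : ℝ) ^ k := by
        intro ω
        rw [real_inner_smul_right, mul_pow, ← mul_assoc, ← mul_pow,
          mul_inv_cancel₀ hwn, one_pow, one_mul]
      simp_rw [hrw]
      rw [integral_const_mul, h, mul_zero]
  -- rewriting the target terms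
  have hterm : ∀ (W : Submodule ℝ (EuclideanSpace ℝ (Fin n)))
      (w : EuclideanSpace ℝ (Fin n)), w ∈ W →
      ‖w‖ ^ m * ∫ ω, (inner ℝ ((Submodule.orthogonalProjectionOnto W (x ω) : EuclideanSpace ℝ (Fin n)))
          (‖w‖⁻¹ • w) : ℝ) ^ m ∂P = ∫ ω, (inner ℝ (x ω) w : ℝ) ^ m ∂P := by
    intro W w hwW
    have hrw1 : ∀ ω, (inner ℝ ((Submodule.orthogonalProjectionOnto W (x ω) : EuclideanSpace ℝ (Fin n)))
        (‖w‖⁻¹ • w) : ℝ) = inner ℝ (x ω) (‖w‖⁻¹ • w) := fun ω =>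
      aux_proj_inner W (x ω) _ (W.smul_mem _ hwW)
    simp_rw [hrw1]
    by_cases hw : w = 0
    · simp [hw, zero_pow hm1.ne']
    · have hwn : ‖w‖ ≠ 0 := norm_ne_zero_iff.mpr hw
      have hrw2 : ∀ ω, (inner ℝ (x ω) (‖w‖⁻¹ • w) : ℝ) ^ m
          = (‖w‖⁻¹) ^ m * (inner ℝ (x ω) w : ℝ) ^ m := by
        intro ω
        rw [real_inner_smul_right, mul_pow]
      simp_rw [hrw2]
      rw [integral_const_mul, ← mul_assoc, ← mul_pow, mul_inv_cancel₀ hwn, one_pow, one_mul]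
  -- measurability / integrability of A and B powers
  have hAint : ∀ k ≤ m, Integrable (fun ω => A ω ^ k) P := fun k hk => hint uV k hk
  have hBint : ∀ k ≤ m, Integrable (fun ω => B ω ^ k) P := fun k hk => hint uW k hk
  -- independence of powers of A and B
  have hindep' : ∀ k j : ℕ, IndepFun (fun ω => A ω ^ k) (fun ω => B ω ^ j) P := by
    intro k j
    have hA' : (fun ω => A ω ^ k)
        = (fun y : EuclideanSpace ℝ (Fin n) => (inner ℝ y uV : ℝ) ^ k)
          ∘ (fun ω => (Submodule.orthogonalProjectionOnto V (x ω) : EuclideanSpace ℝ (Fin n))) := by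
      funext ω
      simp only [Function.comp, hAdef]
      rw [aux_proj_inner V (x ω) uV (Submodule.orthogonalProjectionOnto V u).2]
    have hB' : (fun ω => B ω ^ j)
        = (fun y : EuclideanSpace ℝ (Fin n) => (inner ℝ y uW : ℝ) ^ j)
          ∘ (fun ω => (Submodule.orthogonalProjectionOnto Vᗮ (x ω) : EuclideanSpace ℝ (Fin n))) := by
      funext ω
      simp only [Function.comp, hBdef]
      rw [aux_proj_inner Vᗮ (x ω) uW (Submodule.orthogonalProjectionOnto Vᗮ u).2]
    rw [hA', hB']
    exact hindep.comp
      (((continuous_id.inner continuous_const).measurable).pow_const k)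
      (((continuous_id.inner continuous_const).measurable).pow_const j)
  -- binomial expansion
  have expand : ∫ ω, (inner ℝ (x ω) u : ℝ) ^ m ∂P
      = ∑ k ∈ Finset.range (m + 1),
          (m.choose k : ℝ) * ((∫ ω, A ω ^ k ∂P) * ∫ ω, B ω ^ (m - k) ∂P) := by
    have hptw : ∀ ω, (inner ℝ (x ω) u : ℝ) ^ m
        = ∑ k ∈ Finset.range (m + 1), A ω ^ k * B ω ^ (m - k) * (m.choose k : ℝ) := by
      intro ω
      rw [← huvw, inner_add_right, add_pow]
    simp_rw [hptw]
    rw [integral_finset_sum]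
    · refine Finset.sum_congr rfl fun k hk => ?_
      have hk' : k ≤ m := Nat.lt_succ_iff.mp (Finset.mem_range.mp hk)
      have h2 : ∫ a, A a ^ k * B a ^ (m - k) ∂P
          = (∫ ω, A ω ^ k ∂P) * ∫ ω, B ω ^ (m - k) ∂P :=
        (hindep' k (m - k)).integral_fun_mul_eq_mul_integral (hAint k hk').1
          (hBint (m - k) (Nat.sub_le m k)).1
      rw [integral_mul_const, h2]
      ring
    · intro k hk
      have hk' : k ≤ m := Nat.lt_succ_iff.mp (Finset.mem_range.mp hk)
      exact (((hindep' k (m - k)).integrable_mul (hAint k hk')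
        (hBint (m - k) (Nat.sub_le m k)))).mul_const _
  rw [expand, Finset.sum_range_succ]
  have hmid : ∑ k ∈ Finset.range m,
      (m.choose k : ℝ) * ((∫ ω, A ω ^ k ∂P) * ∫ ω, B ω ^ (m - k) ∂P)
      = (∫ ω, B ω ^ m ∂P) := by
    rw [Finset.sum_eq_single_of_mem 0 (Finset.mem_range.mpr hm1)]
    · simp
    · intro k hk hk0
      have hkm : k < m := Finset.mem_range.mp hk
      rcases Nat.even_or_odd k with hke | hko
      · have hodd' : Odd (m - k) := Nat.Odd.sub_even hkm.le hm hke
        have hlt : m - k < m := Nat.sub_lt hm1 (Nat.pos_of_ne_zero hk0)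
        rw [hzero uW (m - k) hodd' hlt]
        ring
      · rw [hzero uV k hko hkm]
        ring
  rw [hmid]
  simp only [Nat.choose_self, Nat.cast_one, one_mul, Nat.sub_self, pow_zero,
    integral_const, measure_univ, ENNReal.toReal_one, smul_eq_mul, mul_one, probReal_univ]
  rw [hterm V uV (Submodule.orthogonalProjectionOnto V u).2, hterm Vᗮ uW (Submodule.orthogonalProjectionOnto Vᗮ u).2]
  ring
end

section
/- (Schwartz–Zippel) Let P be a nonzero polynomial of total degree at most d in n variables over a field F, let S be a finite nonempty subset of F, and let r_1,…,r_n be chosen independently and uniformly at random from S. Then the probability that P(r_1,…,r_n) = 0 is at most d/|S|. -/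
open Finset MvPolynomial

lemma poly_roots_filter_card {F : Type*} [Field F] [DecidableEq F]
    (p : Polynomial F) (hp : p ≠ 0) (S : Finset F) :
    (S.filter fun y => Polynomial.eval y p = 0).card ≤ p.natDegree := by
  have hsub : (S.filter fun y => Polynomial.eval y p = 0) ⊆ p.roots.toFinset := by
    intro y hy
    simp only [mem_filter] at hy
    simp [Polynomial.mem_roots, hp, Polynomial.IsRoot, hy.2]
  calc (S.filter fun y => Polynomial.eval y p = 0).card
      ≤ p.roots.toFinset.card := Finset.card_le_card hsub
    _ ≤ Multiset.card p.roots := Multiset.toFinset_card_le _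
    _ ≤ p.natDegree := Polynomial.card_roots' p

lemma schwartz_zippel_nat {F : Type*} [Field F] [DecidableEq F] :
    ∀ (n : ℕ) (P : MvPolynomial (Fin n) F), P ≠ 0 → ∀ S : Finset F,
      (((Fintype.piFinset fun _ : Fin n => S).filter
        fun r => MvPolynomial.eval r P = 0).card) * S.card
        ≤ P.totalDegree * S.card ^ n := by
  intro n
  induction n with
  | zero =>
    intro P hP S
    have : ((Fintype.piFinset fun _ : Fin 0 => S).filter
        fun r => MvPolynomial.eval r P = 0) = ∅ := by
      rw [Finset.filter_eq_empty_iff]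
      intro r _
      have : P = C (P.coeff 0) := (P.eq_C_of_isEmpty)
      rw [this]
      simp only [eval_C]
      intro h
      apply hP
      rw [this, h, map_zero]
    rw [this]
    simp
  | succ n ih =>
    intro P hP S
    set P' : Polynomial (MvPolynomial (Fin n) F) := finSuccEquiv F n P with hP'def
    have hP' : P' ≠ 0 := by
      simp only [hP'def, ne_eq, EmbeddingLike.map_eq_zero_iff]
      exact hP
    set i := P'.natDegree with hidef
    set Q := P'.leadingCoeff with hQdef
    have hQ : Q ≠ 0 := Polynomial.leadingCoeff_ne_zero.mpr hP'
    have hdeg : Q.totalDegree + i ≤ P.totalDegree := by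
      apply totalDegree_coeff_finSuccEquiv_add_le
      rwa [← Polynomial.leadingCoeff]
    set A := Fintype.piFinset fun _ : Fin (n+1) => S with hA
    set B := Fintype.piFinset fun _ : Fin n => S with hB
    -- fiberwise counting over the tail
    have hmaps : ∀ r ∈ A.filter fun r => MvPolynomial.eval r P = 0, Fin.tail r ∈ B := by
      intro r hr
      simp only [mem_filter, hA, Fintype.mem_piFinset] at hr
      simp only [hB, Fintype.mem_piFinset]
      intro a; exact hr.1 _
    have hcardeq : (A.filter fun r => MvPolynomial.eval r P = 0).card
        = ∑ s ∈ B, ((A.filter fun r => MvPolynomial.eval r P = 0).filter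
            fun r => Fin.tail r = s).card :=
      Finset.card_eq_sum_card_fiberwise hmaps
    -- each fiber is in bijection with a filter of S
    have hfiber : ∀ s ∈ B, ((A.filter fun r => MvPolynomial.eval r P = 0).filter
        fun r => Fin.tail r = s).card
        = (S.filter fun y => MvPolynomial.eval (Fin.cons y s) P = 0).card := by
      intro s hs
      simp only [hB, Fintype.mem_piFinset] at hs
      apply Finset.card_nbij' (fun r => r 0) (fun y => Fin.cons y s)
      · intro r hr
        simp only [mem_coe, mem_filter, hA, Fintype.mem_piFinset] at hr
        obtain ⟨⟨h1, h2⟩, h3⟩ := hr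
        simp only [mem_coe, mem_filter]
        refine ⟨h1 0, ?_⟩
        rw [← h3, Fin.cons_self_tail]
        exact h2
      · intro y hy
        simp only [mem_coe, mem_filter] at hy
        simp only [mem_coe, mem_filter, hA, Fintype.mem_piFinset]
        refine ⟨⟨?_, hy.2⟩, ?_⟩
        · intro a
          refine Fin.cases ?_ ?_ a
          · simpa using hy.1
          · intro j; simpa using hs j
        · simp [Fin.tail_cons]
      · intro r hr
        simp only [mem_coe, mem_filter] at hr
        beta_reduce
        rw [← hr.2, Fin.cons_self_tail]
      · intro y hy
        simp [Fin.cons_zero]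
    -- bound each fiber
    have hbound : ∀ s ∈ B, (S.filter fun y => MvPolynomial.eval (Fin.cons y s) P = 0).card
        ≤ if MvPolynomial.eval s Q = 0 then S.card else i := by
      intro s hs
      split_ifs with hQs
      · exact Finset.card_le_card (Finset.filter_subset _ _)
      · -- univariate polynomial  map (eval s) P'
        set p : Polynomial F := P'.map (MvPolynomial.eval s) with hpdef
        have hlead : MvPolynomial.eval s P'.leadingCoeff ≠ 0 := hQs
        have hp0 : p ≠ 0 := by
          intro h
          apply hlead
          have := Polynomial.leadingCoeff_map_of_leadingCoeff_ne_zero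
            (MvPolynomial.eval s) hlead (p := P')
          rw [← hpdef, h] at this
          simpa using this.symm
        have hdegp : p.natDegree = i := by
          exact Polynomial.natDegree_map_of_leadingCoeff_ne_zero _ hlead
        have : (S.filter fun y => MvPolynomial.eval (Fin.cons y s) P = 0)
            = (S.filter fun y => Polynomial.eval y p = 0) := by
          apply Finset.filter_congr
          intro y _
          rw [eval_eq_eval_mv_eval']
        rw [this, ← hdegp]
        exact poly_roots_filter_card p hp0 S
    -- split B according to whether Q vanishes
    have hsum : ∑ s ∈ B, ((A.filter fun r => MvPolynomial.eval r P = 0).filter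
        fun r => Fin.tail r = s).card
        ≤ (B.filter fun s => MvPolynomial.eval s Q = 0).card * S.card + B.card * i := by
      calc ∑ s ∈ B, ((A.filter fun r => MvPolynomial.eval r P = 0).filter
            fun r => Fin.tail r = s).card
          ≤ ∑ s ∈ B, (if MvPolynomial.eval s Q = 0 then S.card else i) := by
            apply Finset.sum_le_sum
            intro s hs
            rw [hfiber s hs]
            exact hbound s hs
        _ ≤ ∑ s ∈ B, ((if MvPolynomial.eval s Q = 0 then S.card else 0) + i) := by
            apply Finset.sum_le_sum
            intro s _
            split_ifs <;> simp
        _ = (B.filter fun s => MvPolynomial.eval s Q = 0).card * S.card + B.card * i := by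
            rw [Finset.sum_add_distrib, Finset.sum_ite, Finset.sum_const, Finset.sum_const,
              Finset.sum_const]
            simp [mul_comm]
    have hBcard : B.card = S.card ^ n := by simp [hB]
    have hIH : (B.filter fun s => MvPolynomial.eval s Q = 0).card * S.card
        ≤ Q.totalDegree * S.card ^ n := ih Q hQ S
    calc ((A.filter fun r => MvPolynomial.eval r P = 0).card) * S.card
        = (∑ s ∈ B, ((A.filter fun r => MvPolynomial.eval r P = 0).filter
            fun r => Fin.tail r = s).card) * S.card := by rw [hcardeq]
      _ ≤ ((B.filter fun s => MvPolynomial.eval s Q = 0).card * S.card + B.card * i) * S.card :=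
          Nat.mul_le_mul_right _ hsum
      _ = (B.filter fun s => MvPolynomial.eval s Q = 0).card * S.card * S.card
            + B.card * i * S.card := by ring
      _ ≤ Q.totalDegree * S.card ^ n * S.card + S.card ^ n * i * S.card := by
          apply Nat.add_le_add
          · exact Nat.mul_le_mul_right _ hIH
          · rw [hBcard]
      _ = (Q.totalDegree + i) * S.card ^ (n + 1) := by ring
      _ ≤ P.totalDegree * S.card ^ (n + 1) := Nat.mul_le_mul_right _ hdeg

/-- Schwartz–Zippel: a nonzero polynomial of total degree at most d over a field F vanishes
on at most a d/|S| fraction of points of Sⁿ. -/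
theorem stmt_6 {F : Type*} [Field F] [DecidableEq F] (n d : ℕ)
    (P : MvPolynomial (Fin n) F) (hP : P ≠ 0) (hd : P.totalDegree ≤ d)
    (S : Finset F) (hS : S.Nonempty) :
    (((Fintype.piFinset fun _ : Fin n => S).filter
        fun r => MvPolynomial.eval r P = 0).card : ℝ) / (S.card ^ n : ℝ)
      ≤ (d : ℝ) / (S.card : ℝ) := by
  have hS0 : 0 < (S.card : ℝ) := by exact_mod_cast Finset.card_pos.mpr hS
  have hSn : 0 < ((S.card : ℝ) ^ n) := pow_pos hS0 n
  rw [div_le_div_iff₀ (by exact_mod_cast hSn) hS0]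
  have key : (((Fintype.piFinset fun _ : Fin n => S).filter
      fun r => MvPolynomial.eval r P = 0).card) * S.card ≤ d * S.card ^ n :=
    le_trans (schwartz_zippel_nat n P hP S)
      (Nat.mul_le_mul_right _ hd)
  exact_mod_cast key
end

section
/- Any isotropic logconcave probability density f on R is bounded above by 1: f(x) ≤ 1 for all x. -/
open MeasureTheory Set
open scoped ENNReal

namespace Stmt10

/-- Tail lintegral. -/
noncomputable def tail (f : ℝ → ℝ) (x : ℝ) : ℝ≥0∞ := ∫⁻ t in Ioi x, ENNReal.ofReal (f t)

lemma tonelli_aux (f : ℝ → ℝ) (hf : Continuous f) (c : ℝ)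
    (w : ℝ → ℝ≥0∞) (hw : Measurable w) (hwfin : ∀ t, w t ≠ ⊤) :
    ∫⁻ x, ENNReal.ofReal (f x) * ∫⁻ t in Ioc c x, w t
      = ∫⁻ t in Ioi c, w t * tail f t := by
  have hF : Measurable (fun x => ENNReal.ofReal (f x)) :=
    ENNReal.measurable_ofReal.comp hf.measurable
  set S : Set (ℝ × ℝ) := {p | c < p.2 ∧ p.2 ≤ p.1} with hSdef
  have hSm : MeasurableSet S :=
    (measurableSet_lt measurable_const measurable_snd).inter
      (measurableSet_le measurable_snd measurable_fst)
  set W : ℝ → ℝ → ℝ≥0∞ :=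
    fun x t => ENNReal.ofReal (f x) * S.indicator (fun p => w p.2) (x, t) with hWdef
  have hWm : Measurable (Function.uncurry W) := by
    have : Function.uncurry W
        = fun p : ℝ × ℝ => ENNReal.ofReal (f p.1) * S.indicator (fun p => w p.2) p := rfl
    rw [this]
    exact (hF.comp measurable_fst).mul ((hw.comp measurable_snd).indicator hSm)
  have key1 : ∀ x, ∫⁻ t, W x t = ENNReal.ofReal (f x) * ∫⁻ t in Ioc c x, w t := by
    intro x
    have h1 : ∀ t, W x t = ENNReal.ofReal (f x) * (Ioc c x).indicator w t := by
      intro t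
      by_cases ht : t ∈ Ioc c x
      · have hmem : (x, t) ∈ S := ⟨ht.1, ht.2⟩
        simp [hWdef, indicator_of_mem ht, indicator_of_mem hmem]
      · have hmem : (x, t) ∉ S := fun hc => ht ⟨hc.1, hc.2⟩
        simp [hWdef, indicator_of_notMem ht, indicator_of_notMem hmem]
    simp_rw [h1]
    rw [lintegral_const_mul' _ _ ENNReal.ofReal_ne_top, lintegral_indicator measurableSet_Ioc]
  have key2 : ∀ t, ∫⁻ x, W x t = (Ioi c).indicator (fun t => w t * tail f t) t := by
    intro t
    by_cases htc : c < t
    · have h1 : ∀ x, W x t = w t * (Ici t).indicator (fun u => ENNReal.ofReal (f u)) x := by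
        intro x
        by_cases hx : t ≤ x
        · have hmem : (x, t) ∈ S := ⟨htc, hx⟩
          simp [hWdef, indicator_of_mem hmem, indicator_of_mem (mem_Ici.2 hx), mul_comm]
        · have hmem : (x, t) ∉ S := fun hc => hx hc.2
          simp [hWdef, indicator_of_notMem hmem,
            indicator_of_notMem (fun hmem2 : x ∈ Ici t => hx hmem2)]
      simp_rw [h1]
      rw [lintegral_const_mul' _ _ (hwfin t),
        lintegral_indicator measurableSet_Ici,
        indicator_of_mem (mem_Ioi.2 htc)]
      congr 1
      rw [tail, ← Measure.restrict_congr_set Ioi_ae_eq_Ici]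
    · have h1 : ∀ x, W x t = 0 := by
        intro x
        have hmem : (x, t) ∉ S := fun hc => htc hc.1
        simp [hWdef, indicator_of_notMem hmem]
      simp_rw [h1]
      rw [lintegral_zero, indicator_of_notMem (by simpa using htc)]
  calc ∫⁻ x, ENNReal.ofReal (f x) * ∫⁻ t in Ioc c x, w t
      = ∫⁻ x, ∫⁻ t, W x t := by simp_rw [key1]
    _ = ∫⁻ t, ∫⁻ x, W x t := lintegral_lintegral_swap hWm.aemeasurable
    _ = ∫⁻ t, (Ioi c).indicator (fun t => w t * tail f t) t := by simp_rw [key2]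
    _ = ∫⁻ t in Ioi c, w t * tail f t := lintegral_indicator measurableSet_Ioi _

lemma right_bounds (f : ℝ → ℝ) (hf : Continuous f) (hpos : ∀ x, 0 ≤ f x)
    (hint : Integrable f)
    (hint1 : Integrable fun x => x * f x) (hint2 : Integrable fun x => x ^ 2 * f x)
    (h4 : ∀ a b t : ℝ, a ≤ b → 0 ≤ t → f a * f (b + t) ≤ f b * f (a + t)) (c : ℝ) :
    f c * ∫ x in Ioi c, (x - c) * f x ≤ (∫ x in Ioi c, f x) ^ 2 ∧
      f c * ∫ x in Ioi c, (x - c) ^ 2 * f x ≤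
        2 * (∫ x in Ioi c, f x) * ∫ x in Ioi c, (x - c) * f x := by
  have hF : Measurable (fun x => ENNReal.ofReal (f x)) :=
    ENNReal.measurable_ofReal.comp hf.measurable
  have hGanti : Antitone (tail f) := fun x y hxy => lintegral_mono_set (Ioi_subset_Ioi hxy)
  have hGm : Measurable (tail f) := hGanti.measurable
  -- integrability
  have hint1' : Integrable fun x => (x - c) * f x := by
    have h0 : Integrable fun x => x * f x - c * f x := hint1.sub (hint.const_mul c)
    exact h0.congr (ae_of_all _ fun x => by ring)
  have hint2' : Integrable fun x => (x - c) ^ 2 * f x := by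
    have h0 : Integrable fun x => x ^ 2 * f x - (2 * c) * (x * f x) + c ^ 2 * f x :=
      (hint2.sub (hint1.const_mul (2 * c))).add (hint.const_mul (c ^ 2))
    exact h0.congr (ae_of_all _ fun x => by ring)
  have hIq : IntegrableOn f (Ioi c) := hint.integrableOn
  have hIA : IntegrableOn (fun x => (x - c) * f x) (Ioi c) := hint1'.integrableOn
  have hIS : IntegrableOn (fun x => (x - c) ^ 2 * f x) (Ioi c) := hint2'.integrableOn
  have hq0 : 0 ≤ ∫ x in Ioi c, f x :=
    setIntegral_nonneg measurableSet_Ioi fun x _ => hpos x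
  have hA0 : 0 ≤ ∫ x in Ioi c, (x - c) * f x :=
    setIntegral_nonneg measurableSet_Ioi fun x hx =>
      mul_nonneg (by have := mem_Ioi.1 hx; linarith) (hpos x)
  -- lintegral representations
  have hGc : tail f c = ENNReal.ofReal (∫ x in Ioi c, f x) :=
    (ofReal_integral_eq_lintegral_ofReal hIq (ae_of_all _ hpos)).symm
  have hGtop : tail f c ≠ ⊤ := by rw [hGc]; exact ENNReal.ofReal_ne_top
  have hAepr : ∫⁻ x in Ioi c, ENNReal.ofReal (x - c) * ENNReal.ofReal (f x)
      = ENNReal.ofReal (∫ x in Ioi c, (x - c) * f x) := by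
    have h1 : ENNReal.ofReal (∫ x in Ioi c, (x - c) * f x)
        = ∫⁻ x in Ioi c, ENNReal.ofReal ((x - c) * f x) :=
      ofReal_integral_eq_lintegral_ofReal hIA
        ((ae_restrict_iff' measurableSet_Ioi).2 (ae_of_all _ fun x hx =>
          mul_nonneg (sub_nonneg.2 (mem_Ioi.1 hx).le) (hpos x)))
    rw [h1]
    refine setLIntegral_congr_fun measurableSet_Ioi (fun x hx => ?_)
    rw [ENNReal.ofReal_mul (sub_nonneg.2 (mem_Ioi.1 hx).le)]
  have hSepr : ∫⁻ x in Ioi c, ENNReal.ofReal ((x - c) ^ 2) * ENNReal.ofReal (f x)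
      = ENNReal.ofReal (∫ x in Ioi c, (x - c) ^ 2 * f x) := by
    have h1 : ENNReal.ofReal (∫ x in Ioi c, (x - c) ^ 2 * f x)
        = ∫⁻ x in Ioi c, ENNReal.ofReal ((x - c) ^ 2 * f x) :=
      ofReal_integral_eq_lintegral_ofReal hIS
        ((ae_restrict_iff' measurableSet_Ioi).2 (ae_of_all _ fun x _ =>
          mul_nonneg (sq_nonneg _) (hpos x)))
    rw [h1]
    refine setLIntegral_congr_fun measurableSet_Ioi (fun x _ => ?_)
    rw [ENNReal.ofReal_mul (sq_nonneg _)]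
  have h2Aepr : ∫⁻ t in Ioi c, ENNReal.ofReal (2 * (t - c)) * ENNReal.ofReal (f t)
      = ENNReal.ofReal (2 * ∫ x in Ioi c, (x - c) * f x) := by
    have hI2A : IntegrableOn (fun x => 2 * ((x - c) * f x)) (Ioi c) := hIA.const_mul 2
    have h1 : ENNReal.ofReal (2 * ∫ x in Ioi c, (x - c) * f x)
        = ∫⁻ x in Ioi c, ENNReal.ofReal (2 * ((x - c) * f x)) := by
      rw [← integral_const_mul]
      exact ofReal_integral_eq_lintegral_ofReal hI2A
        ((ae_restrict_iff' measurableSet_Ioi).2 (ae_of_all _ fun x hx =>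
          mul_nonneg (by norm_num)
            (mul_nonneg (sub_nonneg.2 (mem_Ioi.1 hx).le) (hpos x))))
    rw [h1]
    refine setLIntegral_congr_fun measurableSet_Ioi (fun x hx => ?_)
    rw [← ENNReal.ofReal_mul (by have := mem_Ioi.1 hx; linarith : (0:ℝ) ≤ 2 * (x - c))]
    congr 1
    ring
  -- Tonelli identities
  have hT1 : ∫⁻ x in Ioi c, ENNReal.ofReal (x - c) * ENNReal.ofReal (f x)
      = ∫⁻ t in Ioi c, tail f t := by
    have htl := tonelli_aux f hf c (fun _ => 1) measurable_const (fun _ => ENNReal.one_ne_top)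
    calc ∫⁻ x in Ioi c, ENNReal.ofReal (x - c) * ENNReal.ofReal (f x)
        = ∫⁻ x, ENNReal.ofReal (f x) * ∫⁻ _ in Ioc c x, (1 : ℝ≥0∞) := by
          rw [← lintegral_indicator measurableSet_Ioi]
          refine lintegral_congr fun x => ?_
          rw [setLIntegral_one, Real.volume_Ioc]
          by_cases hx : c < x
          · rw [indicator_of_mem (mem_Ioi.2 hx), mul_comm]
          · push_neg at hx
            rw [indicator_of_notMem (fun hmem => absurd (mem_Ioi.1 hmem) (not_lt.2 hx)),
              show ENNReal.ofReal (x - c) = 0 from ENNReal.ofReal_eq_zero.2 (by linarith),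
              mul_zero]
      _ = ∫⁻ t in Ioi c, (1 : ℝ≥0∞) * tail f t := htl
      _ = ∫⁻ t in Ioi c, tail f t := by simp
  have hT2 : ∫⁻ x in Ioi c, ENNReal.ofReal ((x - c) ^ 2) * ENNReal.ofReal (f x)
      = ∫⁻ t in Ioi c, ENNReal.ofReal (2 * (t - c)) * tail f t := by
    have hwm : Measurable fun t : ℝ => ENNReal.ofReal (2 * (t - c)) :=
      ENNReal.measurable_ofReal.comp (by fun_prop)
    have htl := tonelli_aux f hf c _ hwm (fun _ => ENNReal.ofReal_ne_top)
    calc ∫⁻ x in Ioi c, ENNReal.ofReal ((x - c) ^ 2) * ENNReal.ofReal (f x)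
        = ∫⁻ x, ENNReal.ofReal (f x) * ∫⁻ t in Ioc c x, ENNReal.ofReal (2 * (t - c)) := by
          rw [← lintegral_indicator measurableSet_Ioi]
          refine lintegral_congr fun x => ?_
          by_cases hx : c < x
          · have hIoc : ∫⁻ t in Ioc c x, ENNReal.ofReal (2 * (t - c))
                = ENNReal.ofReal ((x - c) ^ 2) := by
              have hcont2 : IntegrableOn (fun t => 2 * (t - c)) (Ioc c x) :=
                Continuous.integrableOn_Ioc (by fun_prop)
              rw [← ofReal_integral_eq_lintegral_ofReal hcont2
                ((ae_restrict_iff' measurableSet_Ioc).2 (ae_of_all _ fun t ht => by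
                  simp only [Pi.zero_apply]; have := ht.1; linarith))]
              congr 1
              rw [← intervalIntegral.integral_of_le hx.le]
              rw [intervalIntegral.integral_const_mul,
                intervalIntegral.integral_comp_sub_right (fun t => t) c]
              simp only [sub_self, integral_id]
              ring
            rw [indicator_of_mem (mem_Ioi.2 hx), hIoc, mul_comm]
          · rw [indicator_of_notMem (by simpa using hx),
              Ioc_eq_empty (by push_neg at hx; exact not_lt.2 hx),
              Measure.restrict_empty, lintegral_zero_measure, mul_zero]
      _ = ∫⁻ t in Ioi c, ENNReal.ofReal (2 * (t - c)) * tail f t := htl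
  -- hazard inequality
  have hshift : ∀ x : ℝ, tail f x = ∫⁻ t in Ioi (0 : ℝ), ENNReal.ofReal (f (x + t)) := by
    intro x
    have hmp : MeasurePreserving (fun t : ℝ => x + t) volume volume :=
      measurePreserving_add_left volume x
    have hemb : MeasurableEmbedding (fun t : ℝ => x + t) :=
      (Homeomorph.addLeft x).measurableEmbedding
    have hpre : (fun t : ℝ => x + t) ⁻¹' Ioi x = Ioi 0 := by ext t; simp
    rw [tail, ← hmp.setLIntegral_comp_preimage_emb hemb _ (Ioi x), hpre]
  have hHaz : ∀ x, c ≤ x →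
      ENNReal.ofReal (f c) * tail f x ≤ ENNReal.ofReal (f x) * tail f c := by
    intro x hcx
    rw [hshift x, hshift c,
      ← lintegral_const_mul' _ _ ENNReal.ofReal_ne_top,
      ← lintegral_const_mul' _ _ ENNReal.ofReal_ne_top]
    refine lintegral_mono_ae ((ae_restrict_iff' measurableSet_Ioi).2
      (ae_of_all _ fun t ht => ?_))
    rw [← ENNReal.ofReal_mul (hpos c), ← ENNReal.ofReal_mul (hpos x)]
    exact ENNReal.ofReal_le_ofReal (h4 c x t hcx (mem_Ioi.1 ht).le)
  -- main chains
  have chainA : ENNReal.ofReal (f c) * ENNReal.ofReal (∫ x in Ioi c, (x - c) * f x)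
      ≤ ENNReal.ofReal (∫ x in Ioi c, f x) * ENNReal.ofReal (∫ x in Ioi c, f x) := by
    calc ENNReal.ofReal (f c) * ENNReal.ofReal (∫ x in Ioi c, (x - c) * f x)
        = ∫⁻ t in Ioi c, ENNReal.ofReal (f c) * tail f t := by
          rw [← hAepr, hT1]; exact (lintegral_const_mul' _ _ ENNReal.ofReal_ne_top).symm
      _ ≤ ∫⁻ t in Ioi c, ENNReal.ofReal (f t) * tail f c :=
          lintegral_mono_ae ((ae_restrict_iff' measurableSet_Ioi).2
            (ae_of_all _ fun t ht => hHaz t (mem_Ioi.1 ht).le))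
      _ = (∫⁻ t in Ioi c, ENNReal.ofReal (f t)) * tail f c :=
          lintegral_mul_const' _ _ hGtop
      _ = ENNReal.ofReal (∫ x in Ioi c, f x) * ENNReal.ofReal (∫ x in Ioi c, f x) := by
          rw [show (∫⁻ t in Ioi c, ENNReal.ofReal (f t)) = tail f c from rfl, hGc]
  have chainS : ENNReal.ofReal (f c) * ENNReal.ofReal (∫ x in Ioi c, (x - c) ^ 2 * f x)
      ≤ ENNReal.ofReal (∫ x in Ioi c, f x)
        * ENNReal.ofReal (2 * ∫ x in Ioi c, (x - c) * f x) := by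
    calc ENNReal.ofReal (f c) * ENNReal.ofReal (∫ x in Ioi c, (x - c) ^ 2 * f x)
        = ∫⁻ t in Ioi c, ENNReal.ofReal (f c)
            * (ENNReal.ofReal (2 * (t - c)) * tail f t) := by
          rw [← hSepr, hT2]; exact (lintegral_const_mul' _ _ ENNReal.ofReal_ne_top).symm
      _ ≤ ∫⁻ t in Ioi c, ENNReal.ofReal (2 * (t - c))
            * (ENNReal.ofReal (f t) * tail f c) := by
          refine lintegral_mono_ae ((ae_restrict_iff' measurableSet_Ioi).2
            (ae_of_all _ fun t ht => ?_))
          rw [← mul_assoc, mul_comm (ENNReal.ofReal (f c)), mul_assoc]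
          exact mul_le_mul_right (hHaz t (mem_Ioi.1 ht).le) _
      _ = (∫⁻ t in Ioi c, ENNReal.ofReal (2 * (t - c)) * ENNReal.ofReal (f t))
            * tail f c := by
          simp_rw [← mul_assoc]
          exact lintegral_mul_const' _ _ hGtop
      _ = ENNReal.ofReal (∫ x in Ioi c, f x)
            * ENNReal.ofReal (2 * ∫ x in Ioi c, (x - c) * f x) := by
          rw [h2Aepr, hGc, mul_comm]
  constructor
  · have h := chainA
    rw [← ENNReal.ofReal_mul (hpos c), ← ENNReal.ofReal_mul hq0] at h
    have := (ENNReal.ofReal_le_ofReal_iff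
      (mul_nonneg hq0 hq0)).1 h
    nlinarith [this]
  · have h := chainS
    rw [← ENNReal.ofReal_mul (hpos c), ← ENNReal.ofReal_mul hq0] at h
    have := (ENNReal.ofReal_le_ofReal_iff
      (mul_nonneg hq0 (by linarith : (0:ℝ) ≤ 2 * ∫ x in Ioi c, (x - c) * f x))).1 h
    nlinarith [this]

end Stmt10

set_option maxHeartbeats 1600000 in
open Stmt10 Set in
/-- An isotropic logconcave probability density on ℝ is bounded above by 1. -/
theorem stmt_10 (f : ℝ → ℝ) (h : ℝ → ℝ)
    (hconc : ConcaveOn ℝ Set.univ h) (hfh : ∀ x, f x = Real.exp (h x))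
    (hint : Integrable f) (hdens : ∫ x, f x = 1)
    (hmean_int : Integrable (fun x => x * f x)) (hmean : ∫ x, x * f x = 0)
    (hvar_int : Integrable (fun x => x ^ 2 * f x)) (hvar : ∫ x, x ^ 2 * f x = 1) :
    ∀ x, f x ≤ 1 := by
  intro c
  -- continuity and positivity
  have hcont_h : Continuous h := by
    have h0 := hconc.continuousOn isOpen_univ
    exact continuousOn_univ.mp h0
  have hcont : Continuous f := by
    have h0 : f = fun x => Real.exp (h x) := funext hfh
    rw [h0]; exact Real.continuous_exp.comp hcont_h
  have hpos : ∀ x, 0 < f x := fun x => by rw [hfh]; exact Real.exp_pos _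
  have hpos' : ∀ x, 0 ≤ f x := fun x => (hpos x).le
  -- four point inequality from concavity
  have h4 : ∀ a b t : ℝ, a ≤ b → 0 ≤ t → f a * f (b + t) ≤ f b * f (a + t) := by
    intro a b t hab ht
    rcases eq_or_lt_of_le hab with rfl | hab
    · rw [mul_comm]
    · rcases eq_or_lt_of_le ht with rfl | ht
      · rw [add_zero, add_zero, mul_comm]
      · have hd : 0 < b - a := sub_pos.2 hab
        have hdt : 0 < b - a + t := by linarith
        have hne : b - a + t ≠ 0 := ne_of_gt hdt
        set l1 := t / (b - a + t) with hl1def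
        set l2 := (b - a) / (b - a + t) with hl2def
        have hl1 : 0 ≤ l1 := div_nonneg ht.le hdt.le
        have hl2 : 0 ≤ l2 := div_nonneg hd.le hdt.le
        have hsum : l1 + l2 = 1 := by rw [hl1def, hl2def]; field_simp; ring
        have hb : l1 * h a + l2 * h (b + t) ≤ h b := by
          have h0 := hconc.2 (Set.mem_univ a) (Set.mem_univ (b + t)) hl1 hl2 hsum
          have harg : l1 * a + l2 * (b + t) = b := by
            rw [hl1def, hl2def]; field_simp; ring
          simpa [smul_eq_mul, harg] using h0
        have hat : l2 * h a + l1 * h (b + t) ≤ h (a + t) := by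
          have h0 := hconc.2 (Set.mem_univ a) (Set.mem_univ (b + t)) hl2 hl1 (by linarith)
          have harg : l2 * a + l1 * (b + t) = a + t := by
            rw [hl1def, hl2def]; field_simp; ring
          simpa [smul_eq_mul, harg] using h0
        have hs1 : l1 * h a + l2 * h a = h a := by linear_combination h a * hsum
        have hs2 : l1 * h (b + t) + l2 * h (b + t) = h (b + t) := by
          linear_combination h (b + t) * hsum
        rw [hfh a, hfh b, hfh (b + t), hfh (a + t), ← Real.exp_add, ← Real.exp_add]
        exact Real.exp_le_exp.2 (by linarith)
  -- right-side bounds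
  obtain ⟨R1, R2⟩ := right_bounds f hcont hpos' hint hmean_int hvar_int h4 c
  -- left side via reflection
  have hgcont : Continuous fun x => f (-x) := hcont.comp continuous_neg
  have hgpos : ∀ x, 0 ≤ f (-x) := fun x => hpos' _
  have hgint : Integrable fun x => f (-x) := hint.comp_neg
  have hgint1 : Integrable fun x => x * f (-x) := by
    have h0 : Integrable fun x : ℝ => -x * f (-x) := hmean_int.comp_neg
    exact h0.neg.congr (ae_of_all _ fun x => by
      simp only [Pi.neg_apply]; ring)
  have hgint2 : Integrable fun x => x ^ 2 * f (-x) := by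
    have h0 : Integrable fun x : ℝ => (-x) ^ 2 * f (-x) := hvar_int.comp_neg
    exact h0.congr (ae_of_all _ fun x => by simp [neg_sq])
  have h4g : ∀ a b t : ℝ, a ≤ b → 0 ≤ t →
      f (-a) * f (-(b + t)) ≤ f (-b) * f (-(a + t)) := by
    intro a b t hab ht
    have h0 := h4 (-b - t) (-a - t) t (by linarith) ht
    rw [show -b - t + t = -b by ring, show -a - t + t = -a by ring] at h0
    rw [show -(b + t) = -b - t by ring, show -(a + t) = -a - t by ring,
      mul_comm (f (-a)), mul_comm (f (-b))]
    exact h0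
  obtain ⟨L1, L2⟩ := right_bounds (fun x => f (-x)) hgcont hgpos hgint hgint1 hgint2 h4g (-c)
  -- convert reflected integrals
  have t0 : (∫ x in Ioi (-c), f (-x)) = ∫ x in Iic c, f x := by
    rw [integral_comp_neg_Ioi, neg_neg]
  have t1 : (∫ x in Ioi (-c), (x - -c) * f (-x)) = ∫ x in Iic c, (c - x) * f x := by
    have e0 := integral_comp_neg_Ioi (-c) (fun y => (c - y) * f y)
    rw [neg_neg] at e0
    rw [← e0]
    exact setIntegral_congr_fun measurableSet_Ioi fun x _ => by ring
  have t2 : (∫ x in Ioi (-c), (x - -c) ^ 2 * f (-x)) = ∫ x in Iic c, (x - c) ^ 2 * f x := by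
    have e0 := integral_comp_neg_Ioi (-c) (fun y => (y - c) ^ 2 * f y)
    rw [neg_neg] at e0
    rw [← e0]
    exact setIntegral_congr_fun measurableSet_Ioi fun x _ => by ring
  rw [t0, t1, neg_neg] at L1
  rw [t0, t1, t2, neg_neg] at L2
  -- abbreviations
  set M := f c with hM
  set q := ∫ x in Ioi c, f x with hq
  set p := ∫ x in Iic c, f x with hp
  set A := ∫ x in Ioi c, (x - c) * f x with hA
  set B := ∫ x in Iic c, (c - x) * f x with hB
  set S := ∫ x in Ioi c, (x - c) ^ 2 * f x with hS
  set T := ∫ x in Iic c, (x - c) ^ 2 * f x with hT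
  -- moment identities
  have hint1' : Integrable fun x => (x - c) * f x := by
    have h0 : Integrable fun x => x * f x - c * f x := hmean_int.sub (hint.const_mul c)
    exact h0.congr (ae_of_all _ fun x => by ring)
  have hint2' : Integrable fun x => (x - c) ^ 2 * f x := by
    have h0 : Integrable fun x => x ^ 2 * f x - (2 * c) * (x * f x) + c ^ 2 * f x :=
      (hvar_int.sub (hmean_int.const_mul (2 * c))).add (hint.const_mul (c ^ 2))
    exact h0.congr (ae_of_all _ fun x => by ring)
  have hpq : p + q = 1 := by
    rw [hp, hq, intervalIntegral.integral_Iic_add_Ioi hint.integrableOn hint.integrableOn, hdens]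
  have hBA : B - A = c := by
    have hsplit : (∫ x in Iic c, (x - c) * f x) + ∫ x in Ioi c, (x - c) * f x
        = ∫ x, (x - c) * f x :=
      intervalIntegral.integral_Iic_add_Ioi hint1'.integrableOn hint1'.integrableOn
    have htot : ∫ x, (x - c) * f x = -c := by
      have e1 : ∫ x, (x - c) * f x = ∫ x, (x * f x - c * f x) :=
        integral_congr_ae (ae_of_all _ fun x => by ring)
      rw [e1, integral_sub hmean_int (hint.const_mul c), integral_const_mul, hmean, hdens]
      ring
    have hBrel : B = -∫ x in Iic c, (x - c) * f x := by
      rw [hB, ← integral_neg]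
      exact setIntegral_congr_fun measurableSet_Iic fun x _ => by ring
    rw [hBrel]
    linarith [hsplit, htot]
  have hST : S + T = 1 + c ^ 2 := by
    have hsplit : (∫ x in Iic c, (x - c) ^ 2 * f x) + ∫ x in Ioi c, (x - c) ^ 2 * f x
        = ∫ x, (x - c) ^ 2 * f x :=
      intervalIntegral.integral_Iic_add_Ioi hint2'.integrableOn hint2'.integrableOn
    have htot : ∫ x, (x - c) ^ 2 * f x = 1 + c ^ 2 := by
      have e1 : ∫ x, (x - c) ^ 2 * f x
          = ∫ x, (x ^ 2 * f x - (2 * c) * (x * f x) + c ^ 2 * f x) :=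
        integral_congr_ae (ae_of_all _ fun x => by ring)
      have hi1 : Integrable fun x => x ^ 2 * f x - 2 * c * (x * f x) :=
        (hvar_int.sub (hmean_int.const_mul (2 * c))).congr (ae_of_all _ fun x => rfl)
      rw [e1, integral_add hi1 (hint.const_mul (c ^ 2)),
        integral_sub hvar_int (hmean_int.const_mul (2 * c)),
        integral_const_mul, integral_const_mul, hvar, hmean, hdens]
      ring
    linarith [hsplit, htot]
  have hq0 : 0 ≤ q := setIntegral_nonneg measurableSet_Ioi fun x _ => hpos' x
  have hp0 : 0 ≤ p := setIntegral_nonneg measurableSet_Iic fun x _ => hpos' x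
  have hA0 : 0 ≤ A := setIntegral_nonneg measurableSet_Ioi fun x hx =>
    mul_nonneg (by have := mem_Ioi.1 hx; linarith) (hpos' x)
  have hB0 : 0 ≤ B := setIntegral_nonneg measurableSet_Iic fun x hx =>
    mul_nonneg (by have := mem_Iic.1 hx; linarith) (hpos' x)
  have hMpos : 0 < M := hpos c
  -- final algebra: R1 : M * A ≤ q ^ 2, R2 : M * S ≤ 2 * q * A,
  -- L1 : M * B ≤ p ^ 2, L2 : M * T ≤ 2 * p * B
  have e1 : M * (M * S) ≤ M * (2 * q * A) := mul_le_mul_of_nonneg_left R2 hMpos.le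
  have e1' : M * (M * T) ≤ M * (2 * p * B) := mul_le_mul_of_nonneg_left L2 hMpos.le
  have eB : M * B = M * A + M * c := by linear_combination M * hBA
  have hST' : M ^ 2 * S + M ^ 2 * T = M ^ 2 + M ^ 2 * c ^ 2 := by
    linear_combination M ^ 2 * hST
  have h1 : M ^ 2 ≤ 2 * q ^ 2 + p ^ 2 := by
    have e2 : M * (2 * p * B) = 2 * p * (M * A) + 2 * p * (M * c) := by
      linear_combination 2 * p * eB
    have epq : 2 * q * (M * A) + 2 * p * (M * A) = 2 * (M * A) := by
      linear_combination 2 * M * A * hpq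
    have esq : 2 * (p * (M * c)) ≤ p ^ 2 + M ^ 2 * c ^ 2 := by
      nlinarith [sq_nonneg (p - M * c)]
    linarith [e1, e1', e2, epq, R1, hST', esq]
  have h2 : M ^ 2 ≤ 2 * p ^ 2 + q ^ 2 := by
    have eA : M * A = M * B - M * c := by linear_combination (-M) * hBA
    have e2 : M * (2 * q * A) = 2 * q * (M * B) - 2 * q * (M * c) := by
      linear_combination 2 * q * eA
    have epq : 2 * q * (M * B) + 2 * p * (M * B) = 2 * (M * B) := by
      linear_combination 2 * M * B * hpq
    have esq : -(2 * (q * (M * c))) ≤ q ^ 2 + M ^ 2 * c ^ 2 := by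
      nlinarith [sq_nonneg (q + M * c)]
    linarith [e1, e1', e2, epq, L1, hST', esq]
  have hfinal : M ^ 2 ≤ 1 := by
    rcases le_total p q with hle | hle
    · have h3 : 2 * p ^ 2 + q ^ 2 ≤ (p + q) ^ 2 := by nlinarith [hp0, hq0, hle]
      calc M ^ 2 ≤ 2 * p ^ 2 + q ^ 2 := h2
        _ ≤ (p + q) ^ 2 := h3
        _ = 1 := by rw [hpq]; norm_num
    · have h3 : 2 * q ^ 2 + p ^ 2 ≤ (p + q) ^ 2 := by nlinarith [hp0, hq0, hle]
      calc M ^ 2 ≤ 2 * q ^ 2 + p ^ 2 := h1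
        _ ≤ (p + q) ^ 2 := h3
        _ = 1 := by rw [hpq]; norm_num
  nlinarith [hfinal, hMpos]
end
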